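/- Splitting estimate for the mass: for any u with the relevant norms finite, any R > 0, any p > 1 and N ≥ 1, ∫|u|² ≤ D_{p,N} R^{N(p-1)/(p+1)} ‖u‖_{L^{p+1}}² + R^{-2} ∫|x|²|u|², where D_{p,N} = (π^{N/2} Γ(2p/(p-1))/Γ(2p/(p-1) + N/2))^{(p-1)/(p+1)}. -/

import Mathlib

open MeasureTheory Real Set Metric


lemma real_beta {a b : ℝ} (ha : 0 < a) (hb : 0 < b) :
    ∫ x in (0:ℝ)..1, x ^ (a-1) * (1-x) ^ (b-1)
      = Real.Gamma a * Real.Gamma b / Real.Gamma (a+b) := by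
  have key := Complex.Gamma_mul_Gamma_eq_betaIntegral (s := (a:ℂ)) (t := (b:ℂ))
    (by simpa using ha) (by simpa using hb)
  have hBeta : Complex.betaIntegral (a:ℂ) (b:ℂ)
      = ((∫ x in (0:ℝ)..1, x ^ (a-1) * (1-x) ^ (b-1) : ℝ) : ℂ) := by
    rw [Complex.betaIntegral, ← intervalIntegral.integral_ofReal]
    refine intervalIntegral.integral_congr fun x hx => ?_
    rw [Set.uIcc_of_le (by norm_num : (0:ℝ) ≤ 1)] at hx
    have hx0 : (0:ℝ) ≤ x := hx.1
    have hx1 : (0:ℝ) ≤ 1 - x := by linarith [hx.2]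
    rw [show ((a:ℂ) - 1) = ((a - 1 : ℝ) : ℂ) by push_cast; ring,
      show ((b:ℂ) - 1) = ((b - 1 : ℝ) : ℂ) by push_cast; ring,
      show (1 - (x:ℂ)) = ((1 - x : ℝ) : ℂ) by push_cast; ring,
      ← Complex.ofReal_cpow hx0, ← Complex.ofReal_cpow hx1]
    push_cast
    ring
  rw [hBeta, ← Complex.ofReal_add, Complex.Gamma_ofReal, Complex.Gamma_ofReal,
    Complex.Gamma_ofReal, ← Complex.ofReal_mul, ← Complex.ofReal_mul] at key
  have := Complex.ofReal_injective key
  have hG : Real.Gamma (a+b) ≠ 0 := (Real.Gamma_pos_of_pos (by linarith)).ne'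
  field_simp
  linarith [this]


lemma radial_beta (N : ℕ) (hN : 1 ≤ N) (q : ℝ) (hq : 0 < q) :
    ∫ y in Ioi (0:ℝ), y ^ (N - 1) • (max (1 - y^2) 0 ^ q)
      = (1/2) * (Real.Gamma ((N:ℝ)/2) * Real.Gamma (q+1) / Real.Gamma ((N:ℝ)/2 + (q+1))) := by
  have hN2 : (0:ℝ) < (N:ℝ)/2 := by positivity
  set F : ℝ → ℝ := fun t => (1/2) * (t ^ ((N:ℝ)/2 - 1) * max (1-t) 0 ^ q) with hF
  have key := integral_comp_rpow_Ioi_of_pos (g := F) (p := 2) (by norm_num)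
  have h1 : ∀ x ∈ Ioi (0:ℝ), (2 * x ^ ((2:ℝ) - 1)) • F (x ^ (2:ℝ))
      = x ^ (N - 1) • (max (1 - x^2) 0 ^ q) := by
    intro x hx
    have hx0 : (0:ℝ) < x := hx
    have hx2 : x ^ (2:ℝ) = x ^ 2 := by
      rw [← Real.rpow_natCast x 2]; norm_num
    rw [hF]
    simp only [smul_eq_mul]
    rw [hx2]
    have : (x^2 : ℝ) ^ ((N:ℝ)/2 - 1) = x ^ ((N:ℝ) - 2) := by
      rw [← Real.rpow_natCast x 2, ← Real.rpow_mul hx0.le]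
      norm_num
      ring_nf
    rw [this]
    have hxp : (x : ℝ) ^ ((2:ℝ) - 1) = x := by
      norm_num
    rw [hxp]
    have hnn : (x : ℝ) ^ (N - 1 : ℕ) = x ^ ((N:ℝ) - 1) := by
      rw [← Real.rpow_natCast x (N-1), Nat.cast_sub hN, Nat.cast_one]
    rw [hnn]
    have : 2 * x * ((1:ℝ)/2 * (x ^ ((N:ℝ) - 2) * max (1 - x^2) 0 ^ q))
        = (x * x ^ ((N:ℝ) - 2)) * max (1 - x^2) 0 ^ q := by ring
    rw [this]
    congr 1
    rw [show (N:ℝ) - 1 = 1 + ((N:ℝ) - 2) by ring, Real.rpow_add hx0, Real.rpow_one]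
  rw [← setIntegral_congr_fun measurableSet_Ioi h1, key]
  -- now ∫ y in Ioi 0, F y
  have h2 : ∀ y ∈ Ioi (0:ℝ), F y = (Ioc (0:ℝ) 1).indicator
      (fun t => (1/2) * (t ^ ((N:ℝ)/2 - 1) * (1-t) ^ q)) y := by
    intro y hy
    by_cases hy1 : y ≤ 1
    · rw [Set.indicator_of_mem (Set.mem_Ioc.mpr ⟨hy, hy1⟩), hF]
      simp only
      rw [max_eq_left (by linarith)]
    · rw [Set.indicator_of_notMem (by simp [hy1]), hF]
      simp only
      rw [max_eq_right (by nlinarith [mem_Ioi.mp hy]), Real.zero_rpow hq.ne', mul_zero, mul_zero]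
  rw [setIntegral_congr_fun measurableSet_Ioi h2, setIntegral_indicator measurableSet_Ioc]
  have hIoc : Ioi (0:ℝ) ∩ Ioc 0 1 = Ioc 0 1 := by
    ext t; constructor
    · rintro ⟨_, h⟩; exact h
    · intro h; exact ⟨h.1, h⟩
  rw [hIoc]
  rw [← intervalIntegral.integral_of_le (by norm_num : (0:ℝ) ≤ 1)]
  rw [intervalIntegral.integral_const_mul]
  have hb := real_beta hN2 (by linarith : (0:ℝ) < q + 1)
  simp only [add_sub_cancel_right] at hb
  rw [hb]

lemma profile_integral (N : ℕ) (hN : 1 ≤ N) (q : ℝ) (hq : 0 < q) :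
    ∫ x : EuclideanSpace ℝ (Fin N), max (1 - ‖x‖^2) 0 ^ q
      = π ^ ((N:ℝ)/2) * Real.Gamma (q+1) / Real.Gamma (q + 1 + (N:ℝ)/2) := by
  haveI : Nonempty (Fin N) := Fin.pos_iff_nonempty.mp (by omega)
  haveI : Nontrivial (EuclideanSpace ℝ (Fin N)) := by
    exact inferInstance
  have hdim : Module.finrank ℝ (EuclideanSpace ℝ (Fin N)) = N := by
    simp [finrank_euclideanSpace]
  have key := MeasureTheory.integral_fun_norm_addHaar
    (volume : Measure (EuclideanSpace ℝ (Fin N)))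
    (fun r : ℝ => max (1 - r^2) 0 ^ q)
  rw [hdim] at key
  rw [key, radial_beta N hN q hq]
  have hvol : ((volume (Metric.ball (0 : EuclideanSpace ℝ (Fin N)) 1)).toReal)
      = Real.sqrt π ^ N / Real.Gamma (N/2 + 1) := by
    rw [EuclideanSpace.volume_ball]
    simp [ENNReal.toReal_ofReal, Real.sqrt_nonneg, div_nonneg,
      (Real.Gamma_pos_of_pos (by positivity : (0:ℝ) < (N:ℕ)/2 + 1)).le]
  rw [measureReal_def, hvol]
  have hsq : Real.sqrt π ^ N = π ^ ((N:ℝ)/2) := by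
    rw [Real.sqrt_eq_rpow, ← Real.rpow_natCast (π ^ ((1:ℝ)/2)) N, ← Real.rpow_mul pi_pos.le]
    ring_nf
  have hGadd : Real.Gamma ((N:ℝ)/2 + 1) = ((N:ℝ)/2) * Real.Gamma ((N:ℝ)/2) := by
    rw [Real.Gamma_add_one (by positivity : ((N:ℝ)/2) ≠ 0)]
  have hG1 : Real.Gamma ((N:ℝ)/2) ≠ 0 := (Real.Gamma_pos_of_pos (by positivity)).ne'
  have hG2 : Real.Gamma ((N:ℝ)/2 + (q+1)) ≠ 0 := (Real.Gamma_pos_of_pos (by positivity)).ne'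
  have hcomm : Real.Gamma (q + 1 + (N:ℝ)/2) = Real.Gamma ((N:ℝ)/2 + (q+1)) := by rw [add_comm]
  have hNne : (N:ℝ) ≠ 0 := by positivity
  rw [nsmul_eq_mul, smul_eq_mul, hsq, hGadd, hcomm]
  have hπ : (0:ℝ) < π ^ ((N:ℝ)/2) := Real.rpow_pos_of_pos pi_pos _
  field_simp

/-- Splitting estimate for the mass: for any `u ∈ L² ∩ L^{p+1}` with `xu ∈ L²`,
any `R > 0`, `p > 1`, `N ≥ 1`:
`∫|u|² ≤ D_{p,N} R^{N(p−1)/(p+1)} ‖u‖_{L^{p+1}}² + R^{−2} ∫|x|²|u|²`, where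
`D_{p,N} = (π^{N/2} Γ(2p/(p−1))/Γ(2p/(p−1)+N/2))^{(p−1)/(p+1)}`. -/
theorem mass_splitting (N : ℕ) (hN : 1 ≤ N) (p : ℝ) (hp : 1 < p)
    (u : EuclideanSpace ℝ (Fin N) → ℂ)
    (hu_L2 : Integrable (fun x => ‖u x‖ ^ 2))
    (hu_Lp1 : Integrable (fun x => ‖u x‖ ^ (p + 1)))
    (hu_var : Integrable (fun x => ‖x‖ ^ 2 * ‖u x‖ ^ 2))
    (R : ℝ) (hR : 0 < R) :
    ∫ x, ‖u x‖ ^ 2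
      ≤ (π ^ ((N : ℝ) / 2) * Real.Gamma (2 * p / (p - 1))
            / Real.Gamma (2 * p / (p - 1) + (N : ℝ) / 2)) ^ ((p - 1) / (p + 1))
          * R ^ ((N : ℝ) * (p - 1) / (p + 1))
          * ((∫ x, ‖u x‖ ^ (p + 1)) ^ (1 / (p + 1))) ^ (2 : ℝ)
        + R ^ (-2 : ℝ) * ∫ x, ‖x‖ ^ 2 * ‖u x‖ ^ 2 := by
  have hp1 : (0:ℝ) < p + 1 := by linarith
  have hpm : (0:ℝ) < p - 1 := by linarith
  set qe : ℝ := (p+1)/(p-1) with hqe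
  set qd : ℝ := (p+1)/2 with hqd
  have hqe_pos : 0 < qe := by positivity
  have hqe1 : 1 < qe := by
    rw [hqe, lt_div_iff₀ hpm]; linarith
  have hconj : qe.HolderConjugate qd := Real.holderConjugate_iff.mpr ⟨hqe1, by rw [hqe, hqd]; field_simp; ring⟩
  set w : EuclideanSpace ℝ (Fin N) → ℝ := fun x => max (1 - ‖x‖^2/R^2) 0 with hw
  have w_nonneg : ∀ x, 0 ≤ w x := fun x => le_max_right _ _
  have g_nonneg : ∀ x : EuclideanSpace ℝ (Fin N), (0:ℝ) ≤ ‖u x‖^2 := fun x => by positivity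
  have w_le_one : ∀ x, w x ≤ 1 := fun x => by
    apply max_le _ zero_le_one
    have : 0 ≤ ‖x‖^2/R^2 := by positivity
    linarith
  have w_cont : Continuous w :=
    (continuous_const.sub ((continuous_norm.pow 2).div_const _)).max continuous_const
  have w_supp : HasCompactSupport w := by
    refine HasCompactSupport.intro (isCompact_closedBall (0:EuclideanSpace ℝ (Fin N)) R) fun x hx => ?_
    have hxR : R < ‖x‖ := by
      simpa [mem_closedBall, dist_zero_right, not_le] using hx
    have : (1:ℝ) - ‖x‖^2/R^2 ≤ 0 := by
      rw [sub_nonpos, le_div_iff₀ (by positivity)]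
      nlinarith
    simpa [hw] using max_eq_right this
  have hw_mem : MemLp w (ENNReal.ofReal qe) := w_cont.memLp_of_hasCompactSupport w_supp
  -- measurability of ‖u‖
  have um : AEStronglyMeasurable (fun x => ‖u x‖) (volume : Measure (EuclideanSpace ℝ (Fin N))) := by
    have h2m := hu_L2.aestronglyMeasurable
    exact (Real.continuous_sqrt.comp_aestronglyMeasurable h2m).congr
      (Filter.Eventually.of_forall fun x => Real.sqrt_sq (norm_nonneg _))
  have hne0 : ENNReal.ofReal (p+1) ≠ 0 := by
    simp [ENNReal.ofReal_eq_zero, not_le, hp1]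
  have hnetop : ENNReal.ofReal (p+1) ≠ ⊤ := ENNReal.ofReal_ne_top
  have hu_mem : MemLp (fun x => ‖u x‖) (ENNReal.ofReal (p+1)) := by
    rw [← memLp_norm_rpow_iff um hne0 hnetop]
    have h1 : (fun x : EuclideanSpace ℝ (Fin N) => ‖‖u x‖‖ ^ (ENNReal.ofReal (p+1)).toReal)
        = fun x => ‖u x‖ ^ (p+1) := by
      funext x
      rw [norm_norm, ENNReal.toReal_ofReal hp1.le]
    rw [h1, ENNReal.div_self hne0 hnetop, memLp_one_iff_integrable]
    exact hu_Lp1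
  have hg_mem : MemLp (fun x : EuclideanSpace ℝ (Fin N) => (‖u x‖^2 : ℝ)) (ENNReal.ofReal qd) := by
    have h2 := hu_mem.norm_rpow_div (2 : ENNReal)
    have hdiv : ENNReal.ofReal (p+1) / 2 = ENNReal.ofReal qd := by
      rw [hqd, ENNReal.ofReal_div_of_pos (by norm_num), ENNReal.ofReal_ofNat]
    rw [hdiv] at h2
    refine h2.ae_eq (Filter.Eventually.of_forall fun x => ?_)
    rw [ENNReal.toReal_ofNat, norm_norm]
    rw [show ((2:ℝ)) = ((2:ℕ):ℝ) by norm_num, Real.rpow_natCast]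
  -- Hölder
  have hH := integral_mul_le_Lp_mul_Lq_of_nonneg (μ := (volume : Measure (EuclideanSpace ℝ (Fin N)))) hconj
    (Filter.Eventually.of_forall w_nonneg) (Filter.Eventually.of_forall g_nonneg) hw_mem hg_mem
  -- pointwise bound
  have hRn : R ^ (-2 : ℝ) = (R^2)⁻¹ := by
    rw [show ((-2:ℝ)) = -((2:ℕ):ℝ) by norm_num, Real.rpow_neg hR.le, Real.rpow_natCast]
  have hpw : ∀ x, ‖u x‖^2 ≤ w x * (‖u x‖^2) + R ^ (-2:ℝ) * (‖x‖^2 * ‖u x‖^2) := by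
    intro x
    rw [hRn]
    have h1 : 1 - ‖x‖^2/R^2 ≤ w x := le_max_left _ _
    have e : (R^2)⁻¹ * (‖x‖^2 * ‖u x‖^2) = (‖x‖^2 / R^2) * ‖u x‖^2 := by
      field_simp
    rw [e]
    nlinarith [mul_le_mul_of_nonneg_right h1 (g_nonneg x)]
  -- integrability
  have hwg_int : Integrable (fun x => w x * (‖u x‖^2)) := by
    refine hu_L2.bdd_mul (c := 1) w_cont.aestronglyMeasurable (Filter.Eventually.of_forall fun x => ?_)
    rw [Real.norm_of_nonneg (w_nonneg x)]
    exact w_le_one x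
  have hvar' : Integrable (fun x => R ^ (-2:ℝ) * (‖x‖^2 * ‖u x‖^2)) :=
    hu_var.const_mul _
  have step1 : ∫ x, ‖u x‖^2 ≤ (∫ x, w x * (‖u x‖^2)) + R ^ (-2:ℝ) * ∫ x, ‖x‖^2 * ‖u x‖^2 := by
    calc ∫ x, ‖u x‖^2 ≤ ∫ x, (w x * (‖u x‖^2) + R ^ (-2:ℝ) * (‖x‖^2 * ‖u x‖^2)) :=
          integral_mono hu_L2 (hwg_int.add hvar') hpw
      _ = (∫ x, w x * (‖u x‖^2)) + R ^ (-2:ℝ) * ∫ x, ‖x‖^2 * ‖u x‖^2 := by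
          rw [integral_add hwg_int hvar', integral_const_mul]
  -- scaling
  have hdim : Module.finrank ℝ (EuclideanSpace ℝ (Fin N)) = N := by simp [finrank_euclideanSpace]
  have hscale : ∫ x, w x ^ qe = R ^ (N:ℕ) * ∫ x : EuclideanSpace ℝ (Fin N), max (1 - ‖x‖^2) 0 ^ qe := by
    have key := MeasureTheory.Measure.integral_comp_inv_smul_of_nonneg
      (volume : Measure (EuclideanSpace ℝ (Fin N))) (fun y : EuclideanSpace ℝ (Fin N) => max (1 - ‖y‖^2) 0 ^ qe) hR.le
    rw [hdim, smul_eq_mul] at key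
    rw [← key]
    refine integral_congr_ae (Filter.Eventually.of_forall fun x => ?_)
    have : ‖R⁻¹ • x‖^2 = ‖x‖^2 / R^2 := by
      rw [norm_smul, Real.norm_eq_abs, abs_of_nonneg (inv_nonneg.mpr hR.le), mul_pow]
      field_simp
    simp only [hw, this]
  have hprof := profile_integral N hN qe hqe_pos
  -- exponent arithmetic
  have hq1 : qe + 1 = 2*p/(p-1) := by rw [hqe]; field_simp; ring
  have hinvq : 1/qe = (p-1)/(p+1) := by rw [hqe, one_div_div]
  have hinvqd : 1/qd = 2/(p+1) := by rw [hqd, one_div_div]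
  set C : ℝ := π ^ ((N:ℝ)/2) * Real.Gamma (2*p/(p-1)) / Real.Gamma (2*p/(p-1) + (N:ℝ)/2) with hC
  have hC_pos : 0 < C := by
    rw [hC]
    have := Real.Gamma_pos_of_pos (show (0:ℝ) < 2*p/(p-1) by positivity)
    have := Real.Gamma_pos_of_pos (show (0:ℝ) < 2*p/(p-1) + (N:ℝ)/2 by positivity)
    have := Real.rpow_pos_of_pos pi_pos ((N:ℝ)/2)
    positivity
  have hprof' : ∫ x : EuclideanSpace ℝ (Fin N), max (1 - ‖x‖^2) 0 ^ qe = C := by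
    rw [hprof, hC, hq1]
  -- first Hölder factor
  have hT1 : (∫ x, w x ^ qe) ^ (1/qe)
      = C ^ ((p-1)/(p+1)) * R ^ ((N:ℝ) * (p-1)/(p+1)) := by
    rw [hscale, hprof', Real.mul_rpow (by positivity) hC_pos.le,
      ← Real.rpow_natCast R N, ← Real.rpow_mul hR.le, hinvq, mul_comm]
    congr 1
    · congr 1; ring
  -- second Hölder factor
  have hA_nonneg : 0 ≤ ∫ x, ‖u x‖ ^ (p+1) :=
    integral_nonneg fun x => Real.rpow_nonneg (norm_nonneg _) _
  have hT2 : (∫ x, (‖u x‖^2) ^ qd) ^ (1/qd)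
      = ((∫ x, ‖u x‖ ^ (p+1)) ^ (1/(p+1))) ^ (2:ℝ) := by
    have e1 : ∫ x, (‖u x‖^2) ^ qd = ∫ x, ‖u x‖ ^ (p+1) := by
      refine integral_congr_ae (Filter.Eventually.of_forall fun x => ?_)
      show ((‖u x‖^2 : ℝ)) ^ qd = ‖u x‖ ^ (p+1)
      rw [show (‖u x‖^2 : ℝ) = ‖u x‖ ^ ((2:ℕ):ℝ) by rw [Real.rpow_natCast],
        ← Real.rpow_mul (norm_nonneg _), hqd]
      congr 1
      push_cast
      ring
    rw [e1, ← Real.rpow_mul hA_nonneg, hinvqd]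
    congr 1
    ring
  calc ∫ x, ‖u x‖^2
      ≤ (∫ x, w x * (‖u x‖^2)) + R ^ (-2:ℝ) * ∫ x, ‖x‖^2 * ‖u x‖^2 := step1
    _ ≤ (∫ x, w x ^ qe) ^ (1/qe) * (∫ x, (‖u x‖^2) ^ qd) ^ (1/qd)
          + R ^ (-2:ℝ) * ∫ x, ‖x‖^2 * ‖u x‖^2 := by
        exact add_le_add_left hH _
    _ = C ^ ((p-1)/(p+1)) * R ^ ((N:ℝ) * (p-1)/(p+1))
          * ((∫ x, ‖u x‖ ^ (p+1)) ^ (1/(p+1))) ^ (2:ℝ)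
          + R ^ (-2:ℝ) * ∫ x, ‖x‖^2 * ‖u x‖^2 := by
        rw [hT1, hT2]
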